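/- Interpolation: let A ∈ ℂ^{n×n}, z ∈ ℂ⁺, and let v be a unit right singular vector of A − zI corresponding to σ_min(A − zI). If V ∈ ℂ^{n×ℓ} has orthonormal columns and v ∈ Col(V), then σ_min(AV − zV) = σ_min(A − zI) and inf_{w∈ℂ⁺} σ_min(AV − wV) ≤ σ_min(A − zI). -/

import Mathlib

open Matrix

/-- Euclidean (ℓ²) norm of a finite complex vector. -/
noncomputable def enorm {ι : Type*} [Fintype ι] (v : ι → ℂ) : ℝ :=
  ‖(EuclideanSpace.equiv ι ℂ).symm v‖

/-- Smallest singular value of a (possibly rectangular) complex matrix,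
characterized as the infimum of ‖Mw‖₂ over unit vectors w. -/
noncomputable def sigmaMin {m l : Type*} [Fintype m] [Fintype l] (M : Matrix m l ℂ) : ℝ :=
  sInf {r : ℝ | ∃ w : l → ℂ, _root_.enorm w = 1 ∧ r = _root_.enorm (M.mulVec w)}

/-- Spectral norm of a complex matrix: supremum of ‖Mw‖₂ over unit vectors w. -/
noncomputable def specNorm {m l : Type*} [Fintype m] [Fintype l] (M : Matrix m l ℂ) : ℝ :=
  sSup {r : ℝ | ∃ w : l → ℂ, _root_.enorm w = 1 ∧ r = _root_.enorm (M.mulVec w)}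

/-- Distance to instability: inf over the closed right half-plane of σ_min(A − zI). -/
noncomputable def distInstab {n : ℕ} (A : Matrix (Fin n) (Fin n) ℂ) : ℝ :=
  sInf {r : ℝ | ∃ z : ℂ, 0 ≤ z.re ∧ r = sigmaMin (A - z • 1)}

/-- Reduced distance: inf over the closed right half-plane of σ_min(AV − zV). -/
noncomputable def redDist {n l : ℕ} (A : Matrix (Fin n) (Fin n) ℂ)
    (V : Matrix (Fin n) (Fin l) ℂ) : ℝ :=
  sInf {r : ℝ | ∃ z : ℂ, 0 ≤ z.re ∧ r = sigmaMin (A * V - z • V)}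

lemma enorm_eq' {ι : Type*} [Fintype ι] (u : ι → ℂ) :
    _root_.enorm u = Real.sqrt ((star u ⬝ᵥ u).re) := by
  rw [_root_.enorm, EuclideanSpace.norm_eq]
  congr 1
  simp [dotProduct, Complex.re_sum, ← Complex.normSq_eq_norm_sq,
    Complex.normSq_eq_conj_mul_self, Complex.normSq_apply]

lemma enorm_mulVec' {n l : ℕ} (V : Matrix (Fin n) (Fin l) ℂ) (hV : Vᴴ * V = 1)
    (w : Fin l → ℂ) : _root_.enorm (V.mulVec w) = _root_.enorm w := by
  rw [enorm_eq', enorm_eq']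
  congr 2
  rw [star_mulVec, dotProduct_mulVec, vecMul_vecMul, ← dotProduct_mulVec, hV, one_mulVec]

lemma sigmaMin_nonneg' {m l : Type*} [Fintype m] [Fintype l] (M : Matrix m l ℂ) :
    0 ≤ sigmaMin M := by
  apply Real.sInf_nonneg
  rintro r ⟨w, -, rfl⟩
  exact norm_nonneg _

/-- interpolation: if a unit right singular vector v of A − zI
corresponding to σ_min(A − zI) lies in Col V, then σ_min(AV − zV) = σ_min(A − zI)
and the reduced distance is at most σ_min(A − zI). -/
theorem sigmaMin_interpolation (n l : ℕ) (A : Matrix (Fin n) (Fin n) ℂ) (z : ℂ)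
    (hz : 0 ≤ z.re) (V : Matrix (Fin n) (Fin l) ℂ) (hV : Vᴴ * V = 1)
    (v : Fin n → ℂ) (hv1 : _root_.enorm v = 1)
    (hvsv : _root_.enorm ((A - z • 1).mulVec v) = sigmaMin (A - z • 1))
    (hvcol : ∃ c : Fin l → ℂ, V.mulVec c = v) :
    sigmaMin (A * V - z • V) = sigmaMin (A - z • 1) ∧
    redDist A V ≤ sigmaMin (A - z • 1) := by
  obtain ⟨c, hc⟩ := hvcol
  have key : ∀ w : Fin l → ℂ,
      (A * V - z • V).mulVec w = (A - z • 1).mulVec (V.mulVec w) := by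
    intro w
    rw [sub_mulVec, sub_mulVec, ← mulVec_mulVec, smul_mulVec, smul_mulVec,
      one_mulVec]
  have hc1 : _root_.enorm c = 1 := by rw [← enorm_mulVec' V hV c, hc, hv1]
  have bdd2 : BddBelow {r : ℝ | ∃ w : Fin l → ℂ, _root_.enorm w = 1 ∧
      r = _root_.enorm ((A * V - z • V).mulVec w)} := by
    refine ⟨0, ?_⟩
    rintro r ⟨w, -, rfl⟩
    exact norm_nonneg _
  have bdd1 : BddBelow {r : ℝ | ∃ w : Fin n → ℂ, _root_.enorm w = 1 ∧
      r = _root_.enorm ((A - z • 1).mulVec w)} := by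
    refine ⟨0, ?_⟩
    rintro r ⟨w, -, rfl⟩
    exact norm_nonneg _
  have hmem : sigmaMin (A - z • 1) ∈ {r : ℝ | ∃ w : Fin l → ℂ, _root_.enorm w = 1 ∧
      r = _root_.enorm ((A * V - z • V).mulVec w)} :=
    ⟨c, hc1, by rw [key, hc, hvsv]⟩
  have h1 : sigmaMin (A * V - z • V) ≤ sigmaMin (A - z • 1) := csInf_le bdd2 hmem
  have h2 : sigmaMin (A - z • 1) ≤ sigmaMin (A * V - z • V) := by
    refine le_csInf ⟨_, hmem⟩ ?_
    rintro r ⟨w, hw, rfl⟩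
    exact csInf_le bdd1 ⟨V.mulVec w, by rw [enorm_mulVec' V hV, hw], by rw [key]⟩
  have heq := le_antisymm h1 h2
  refine ⟨heq, ?_⟩
  have bddR : BddBelow {r : ℝ | ∃ z : ℂ, 0 ≤ z.re ∧ r = sigmaMin (A * V - z • V)} := by
    refine ⟨0, ?_⟩
    rintro r ⟨z', -, rfl⟩
    exact sigmaMin_nonneg' _
  exact csInf_le bddR ⟨z, hz, heq.symm⟩
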